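/- Let Ω ⊆ ℝ^d be a nonempty bounded open set and L : Ω × M^{m×d} → [0,∞] Borel measurable. Assume (H1): there is ρ₀ > 0 with ∫_Ω L(x,ξ) dx < ∞ for every matrix ξ with all entries in [−ρ₀, ρ₀]; and (H3): there is C > 0 such that L(x, tξ + (1−t)ζ) ≤ C(1 + L(x,ξ) + L(x,ζ)) for all ξ,ζ ∈ M^{m×d}, x ∈ Ω, t ∈ (0,1). Then ∫_Ω sup_{ζ ∈ Q̄_{ρ₀}(0)} L(x,ζ) dx < ∞, where Q̄_{ρ₀}(0) is the set of matrices with all entries in [−ρ₀, ρ₀]. -/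

import Mathlib

open Filter Set Topology MeasureTheory

/-- Matrices are measurably a function space. -/
instance matrixMeasurableSpace {m d : ℕ} : MeasurableSpace (Matrix (Fin m) (Fin d) ℝ) :=
  inferInstanceAs (MeasurableSpace ((Fin m) → (Fin d) → ℝ))

/-- The closed cube `Q̄_ρ(0)` of matrices with all entries in `[−ρ, ρ]`. -/
def matCube (m d : ℕ) (ρ : ℝ) : Set (Matrix (Fin m) (Fin d) ℝ) :=
  {ξ | ∀ i j, |ξ i j| ≤ ρ}

/-- If `L` is Borel measurable, satisfies (H1) (finiteness of `∫_Ω L(·,ξ)` for every `ξ`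
with entries in `[−ρ₀,ρ₀]`) and (H3), then `∫_Ω sup_{ζ ∈ Q̄_{ρ₀}(0)} L(x,ζ) dx < ∞`. -/
theorem stmt6 {d m : ℕ} (Ω : Set (Fin d → ℝ))
    (hΩopen : IsOpen Ω) (hΩne : Ω.Nonempty) (hΩbd : Bornology.IsBounded Ω)
    (L : (Fin d → ℝ) → Matrix (Fin m) (Fin d) ℝ → ENNReal)
    (hmeas : Measurable (Function.uncurry L))
    (ρ₀ : ℝ) (hρ₀ : 0 < ρ₀)
    (h1 : ∀ ξ ∈ matCube m d ρ₀, ∫⁻ x in Ω, L x ξ < ⊤)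
    (C : ℝ) (hC : 0 < C)
    (h3 : ∀ x ∈ Ω, ∀ ξ ζ : Matrix (Fin m) (Fin d) ℝ, ∀ t ∈ Set.Ioo (0 : ℝ) 1,
      L x (t • ξ + (1 - t) • ζ) ≤ ENNReal.ofReal C * (1 + L x ξ + L x ζ)) :
    ∫⁻ x in Ω, (⨆ ζ ∈ matCube m d ρ₀, L x ζ) < ⊤ := by
  classical
  -- grid points
  set g : ((Fin m) → (Fin d) → Bool) → Matrix (Fin m) (Fin d) ℝ :=
    fun s i j => if s i j then ρ₀ else -ρ₀ with hgdef
  have hgcube : ∀ s, g s ∈ matCube m d ρ₀ := by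
    intro s i j
    simp only [hgdef]
    split <;> simp [abs_of_pos hρ₀, abs_of_neg (neg_neg_iff_pos.mpr hρ₀), hρ₀.le]
  set S : (Fin d → ℝ) → ENNReal :=
    fun x => ∑ s : (Fin m) → (Fin d) → Bool, L x (g s) with hSdef
  set D : ENNReal := 1 + 3 * ENNReal.ofReal C with hDdef
  have hD1 : (1 : ENNReal) ≤ D := le_self_add
  have hDtop : D ≠ ⊤ := by
    simp [hDdef, ENNReal.add_ne_top, ENNReal.mul_ne_top, ENNReal.ofReal_ne_top]
  -- number of "non-extreme" entries
  set bad : Matrix (Fin m) (Fin d) ℝ → Finset (Fin m × Fin d) :=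
    fun ξ => Finset.univ.filter (fun p => ξ p.1 p.2 ≠ ρ₀ ∧ ξ p.1 p.2 ≠ -ρ₀) with hbaddef
  have key : ∀ n : ℕ, ∀ x ∈ Ω, ∀ ξ ∈ matCube m d ρ₀, (bad ξ).card ≤ n →
      L x ξ ≤ D ^ n * (1 + S x) := by
    intro n
    induction n with
    | zero =>
      intro x hx ξ hξ hcard
      have hempty : bad ξ = ∅ := Finset.card_eq_zero.mp (Nat.le_zero.mp hcard)
      have hall : ∀ i j, ξ i j = ρ₀ ∨ ξ i j = -ρ₀ := by
        intro i j
        by_contra hcc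
        push_neg at hcc
        have : (i, j) ∈ bad ξ := by
          simp [hbaddef, hcc.1, hcc.2]
        simp [hempty] at this
      have hξg : ξ = g (fun i j => decide (ξ i j = ρ₀)) := by
        funext i j
        simp only [hgdef]
        rcases hall i j with h | h
        · simp [h]
        · have hne : ξ i j ≠ ρ₀ := by
            rw [h]; intro hcon
            nlinarith
          rw [if_neg (by simp [hne])]
          exact h
      calc L x ξ = L x (g (fun i j => decide (ξ i j = ρ₀))) := by rw [← hξg]
        _ ≤ S x := by
            show L x _ ≤ ∑ s : (Fin m) → (Fin d) → Bool, L x (g s)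
            exact Finset.single_le_sum (f := fun s => L x (g s)) (fun s _ => zero_le')
              (Finset.mem_univ _)
        _ ≤ 1 + S x := le_add_self
        _ = D ^ 0 * (1 + S x) := by simp
    | succ n ih =>
      intro x hx ξ hξ hcard
      by_cases hle : (bad ξ).card ≤ n
      · calc L x ξ ≤ D ^ n * (1 + S x) := ih x hx ξ hξ hle
          _ ≤ D ^ (n + 1) * (1 + S x) :=
            mul_le_mul_left (pow_le_pow_right₀ hD1 (Nat.le_succ n)) _
      · obtain ⟨p, hp⟩ : (bad ξ).Nonempty := by
          rw [Finset.nonempty_iff_ne_empty]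
          intro hcon
          exact hle (by simp [hcon])
        have hpmem := hp
        rw [hbaddef, Finset.mem_filter] at hpmem
        obtain ⟨-, hne1, hne2⟩ := hpmem
        set a : ℝ := ξ p.1 p.2 with hadef
        have habs : |a| ≤ ρ₀ := hξ p.1 p.2
        have halt : a < ρ₀ := lt_of_le_of_ne (abs_le.mp habs).2 hne1
        have hagt : -ρ₀ < a := lt_of_le_of_ne (abs_le.mp habs).1 (fun hcon => hne2 hcon.symm)
        set t : ℝ := (a + ρ₀) / (2 * ρ₀) with htdef
        have ht : t ∈ Set.Ioo (0 : ℝ) 1 := by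
          constructor
          · apply div_pos (by linarith) (by linarith)
          · rw [div_lt_one (by linarith)]; linarith
        -- the two updates
        set upd : ℝ → Matrix (Fin m) (Fin d) ℝ :=
          fun v => Function.update ξ p.1 (Function.update (ξ p.1) p.2 v) with hupddef
        have hupd_eval : ∀ v i j, upd v i j = if i = p.1 ∧ j = p.2 then v else ξ i j := by
          intro v i j
          simp only [hupddef]
          by_cases hi : i = p.1
          · subst hi
            erw [Function.update_self]
            by_cases hj : j = p.2
            · subst hj; simp
            · rw [Function.update_of_ne hj]
              simp [hj]
          · erw [Function.update_of_ne hi]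
            simp [hi]
        have hupdcube : ∀ v, |v| ≤ ρ₀ → upd v ∈ matCube m d ρ₀ := by
          intro v hv i j
          rw [hupd_eval]
          split
          · exact hv
          · exact hξ i j
        have hcombo : t • upd ρ₀ + (1 - t) • upd (-ρ₀) = ξ := by
          funext i j
          have : (t • upd ρ₀ + (1 - t) • upd (-ρ₀)) i j
              = t * upd ρ₀ i j + (1 - t) * upd (-ρ₀) i j := rfl
          rw [this, hupd_eval, hupd_eval]
          by_cases h : i = p.1 ∧ j = p.2
          · simp only [h, and_self, if_true]
            obtain ⟨hi, hj⟩ := h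
            subst hi; subst hj
            rw [← hadef, htdef]
            field_simp
            ring
          · simp only [h, if_false]
            ring
        have hbadupd : ∀ v, v = ρ₀ ∨ v = -ρ₀ → (bad (upd v)).card ≤ n := by
          intro v hv
          have hsub : bad (upd v) ⊆ (bad ξ).erase p := by
            intro q hq
            rw [hbaddef, Finset.mem_filter] at hq
            obtain ⟨-, hq1, hq2⟩ := hq
            rw [hupd_eval] at hq1 hq2
            by_cases hqp : q.1 = p.1 ∧ q.2 = p.2
            · exfalso
              rw [if_pos hqp] at hq1 hq2
              rcases hv with h | h
              · exact hq1 h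
              · exact hq2 h
            · rw [if_neg hqp] at hq1 hq2
              rw [Finset.mem_erase]
              constructor
              · intro hcon
                subst hcon
                exact hqp ⟨rfl, rfl⟩
              · simp [hbaddef, hq1, hq2]
          calc (bad (upd v)).card ≤ ((bad ξ).erase p).card := Finset.card_le_card hsub
            _ = (bad ξ).card - 1 := Finset.card_erase_of_mem hp
            _ ≤ n := by omega
        have hB1 : (1 : ENNReal) ≤ D ^ n * (1 + S x) := by
          calc (1 : ENNReal) = 1 * 1 := (one_mul 1).symm
            _ ≤ D ^ n * (1 + S x) := mul_le_mul' (one_le_pow_of_one_le' hD1 n) le_self_add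
        have hplus := ih x hx (upd ρ₀) (hupdcube _ (by rw [abs_of_pos hρ₀])) (hbadupd _ (Or.inl rfl))
        have hminus := ih x hx (upd (-ρ₀)) (hupdcube _ (by rw [abs_neg, abs_of_pos hρ₀]))
          (hbadupd _ (Or.inr rfl))
        calc L x ξ = L x (t • upd ρ₀ + (1 - t) • upd (-ρ₀)) := by rw [hcombo]
          _ ≤ ENNReal.ofReal C * (1 + L x (upd ρ₀) + L x (upd (-ρ₀))) := h3 x hx _ _ t ht
          _ ≤ ENNReal.ofReal C * (D ^ n * (1 + S x) + D ^ n * (1 + S x) + D ^ n * (1 + S x)) := by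
              gcongr
          _ = (3 * ENNReal.ofReal C) * (D ^ n * (1 + S x)) := by ring
          _ ≤ D * (D ^ n * (1 + S x)) := by
              gcongr
              exact le_add_self
          _ = D ^ (n + 1) * (1 + S x) := by rw [pow_succ]; ring
  -- measurability of the L(·, g s)
  have hLmeas : ∀ ζ : Matrix (Fin m) (Fin d) ℝ, Measurable (fun x => L x ζ) := by
    intro ζ
    exact hmeas.comp (measurable_id.prodMk measurable_const)
  have hSmeas : Measurable S := by
    apply Finset.measurable_sum
    intro s _
    exact hLmeas (g s)
  have hcard : ∀ ξ : Matrix (Fin m) (Fin d) ℝ, (bad ξ).card ≤ m * d := by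
    intro ξ
    calc (bad ξ).card ≤ (Finset.univ : Finset (Fin m × Fin d)).card :=
          Finset.card_le_card (Finset.filter_subset _ _)
      _ = m * d := by simp
  have hbound : ∀ x ∈ Ω, (⨆ ζ ∈ matCube m d ρ₀, L x ζ) ≤ D ^ (m * d) * (1 + S x) := by
    intro x hx
    apply iSup₂_le
    intro ζ hζ
    exact key (m * d) x hx ζ hζ (hcard ζ)
  have hmono : ∫⁻ x in Ω, (⨆ ζ ∈ matCube m d ρ₀, L x ζ)
      ≤ ∫⁻ x in Ω, D ^ (m * d) * (1 + S x) := by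
    apply setLIntegral_mono' hΩopen.measurableSet hbound
  have hfin : ∫⁻ x in Ω, D ^ (m * d) * (1 + S x) < ⊤ := by
    rw [lintegral_const_mul' _ _ (ENNReal.pow_ne_top hDtop)]
    apply ENNReal.mul_lt_top (ENNReal.pow_ne_top hDtop).lt_top
    rw [lintegral_add_left measurable_const]
    apply ENNReal.add_lt_top.mpr
    constructor
    · simp only [lintegral_const, Measure.restrict_apply MeasurableSet.univ, Set.univ_inter,
        one_mul]
      exact hΩbd.measure_lt_top
    · rw [lintegral_finset_sum _ (fun s _ => hLmeas (g s))]
      exact ENNReal.sum_lt_top.mpr (fun s _ => h1 (g s) (hgcube s))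
  exact lt_of_le_of_lt hmono hfin
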